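/- Let n be a natural number with n ≥ 1, let κ ∈ ℝ, and let f : ℝ → ℝ. Suppose u : ℝ → ℝ → ℝ is C² on ℝ × (0,∞), u_r(t,r) ≠ 0 for all t ∈ ℝ and r > 0, and u satisfies the radial equation u_t(t,r) = κ·(u_rr(t,r) − ((n−1)/r)·u_r(t,r))/u_r(t,r)² + f(u(t,r)) for all t ∈ ℝ and r > 0 (the radial nonlinear diffusion–reaction equation in n dimensions with gradient diffusivity g(|u_r|) = −κ/u_r²). Suppose w : ℝ → ℝ → ℝ is C² on ℝ² and satisfies w(t, u(t,r)) = r^n/n for all t ∈ ℝ and r > 0. Then for all t ∈ ℝ and r > 0, setting z = u(t,r), one has w_t(t,z) = κ·w_zz(t,z) − f(z)·w_z(t,z). -/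

import Mathlib

noncomputable section

/-- Partial derivative in the first (time) variable. -/
def partial_t (u : ℝ → ℝ → ℝ) (t r : ℝ) : ℝ := deriv (fun s => u s r) t

/-- Partial derivative in the second (space) variable. -/
def partial_r (u : ℝ → ℝ → ℝ) (t r : ℝ) : ℝ := deriv (fun s => u t s) r

/-- Second partial derivative in the second (space) variable. -/
def partial_rr (u : ℝ → ℝ → ℝ) (t r : ℝ) : ℝ := deriv (deriv (fun s => u t s)) r

/-- Mixed partial derivative: first in space, then in time. -/
def partial_tr (u : ℝ → ℝ → ℝ) (t r : ℝ) : ℝ := deriv (fun s => deriv (fun y => u s y) r) t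

/-- `u` is C² on ℝ × (0,∞): `u`, `u_t`, `u_r`, `u_rr` and the mixed partial `u_tr`
exist and are continuous there. -/
def IsC2On (u : ℝ → ℝ → ℝ) : Prop :=
  (∀ t r : ℝ, 0 < r → DifferentiableAt ℝ (fun s => u s r) t) ∧
  (∀ t r : ℝ, 0 < r → DifferentiableAt ℝ (fun s => u t s) r) ∧
  (∀ t r : ℝ, 0 < r → DifferentiableAt ℝ (deriv (fun s => u t s)) r) ∧
  (∀ t r : ℝ, 0 < r → DifferentiableAt ℝ (fun s => deriv (fun y => u s y) r) t) ∧
  ContinuousOn (fun q : ℝ × ℝ => u q.1 q.2) {q : ℝ × ℝ | 0 < q.2} ∧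
  ContinuousOn (fun q : ℝ × ℝ => partial_t u q.1 q.2) {q : ℝ × ℝ | 0 < q.2} ∧
  ContinuousOn (fun q : ℝ × ℝ => partial_r u q.1 q.2) {q : ℝ × ℝ | 0 < q.2} ∧
  ContinuousOn (fun q : ℝ × ℝ => partial_rr u q.1 q.2) {q : ℝ × ℝ | 0 < q.2} ∧
  ContinuousOn (fun q : ℝ × ℝ => partial_tr u q.1 q.2) {q : ℝ × ℝ | 0 < q.2}

private lemma pow_helper (n : ℕ) (hn : 1 ≤ n) (r : ℝ) :
    ((n - 1 : ℕ) : ℝ) * r ^ (n - 1 - 1) * r = ((n : ℝ) - 1) * r ^ (n - 1) := by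
  obtain ⟨m, rfl⟩ : ∃ m, n = m + 1 := ⟨n - 1, (Nat.succ_pred_eq_of_pos hn).symm⟩
  simp only [Nat.add_sub_cancel, Nat.cast_add, Nat.cast_one, add_sub_cancel_right]
  cases m with
  | zero => simp
  | succ k =>
    rw [show k + 1 - 1 = k by omega, mul_assoc, ← pow_succ]

/-- Hodograph linearization of the radial nonlinear diffusion-reaction equation in `n`
dimensions with gradient diffusivity `g(|u_r|) = -κ/u_r²`. -/
theorem hodograph_radial (n : ℕ) (hn : 1 ≤ n) (κ : ℝ) (f : ℝ → ℝ)
    (u : ℝ → ℝ → ℝ) (hu : IsC2On u)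
    (hur : ∀ t r : ℝ, 0 < r → partial_r u t r ≠ 0)
    (hpde : ∀ t r : ℝ, 0 < r →
      partial_t u t r
        = κ * (partial_rr u t r - (((n : ℝ) - 1) / r) * partial_r u t r)
            / (partial_r u t r) ^ 2 + f (u t r))
    (w : ℝ → ℝ → ℝ) (hw : ContDiff ℝ 2 (Function.uncurry w))
    (hhod : ∀ t r : ℝ, 0 < r → w t (u t r) = r ^ n / (n : ℝ)) :
    ∀ t r : ℝ, 0 < r →
      partial_t w t (u t r)
        = κ * partial_rr w t (u t r) - f (u t r) * partial_r w t (u t r) := by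
  obtain ⟨hut, hur', hurr, -, -, -, -, -, -⟩ := hu
  have hWd : Differentiable ℝ (Function.uncurry w) := hw.differentiable two_ne_zero
  have hwt2 : ∀ t : ℝ, ContDiff ℝ 2 (fun z => w t z) :=
    fun t => hw.comp (contDiff_const.prodMk contDiff_id)
  have hDz : ∀ t z : ℝ, HasDerivAt (fun y => w t y) (partial_r w t z) z :=
    fun t z => ((hwt2 t).differentiable two_ne_zero z).hasDerivAt
  have hderiv1 : ∀ t : ℝ, ContDiff ℝ 1 (deriv (fun y => w t y)) := by
    intro t
    have h' : ContDiff ℝ ((1 : ℕ) + 1) (fun y => w t y) := by exact_mod_cast hwt2 t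
    exact_mod_cast (contDiff_succ_iff_deriv.mp h').2.2
  have hDzz : ∀ t z : ℝ, HasDerivAt (deriv (fun y => w t y)) (partial_rr w t z) z :=
    fun t z => ((hderiv1 t).differentiable one_ne_zero z).hasDerivAt
  intro t r hr
  have hrne : r ≠ 0 := ne_of_gt hr
  have hne : partial_r u t r ≠ 0 := hur t r hr
  set z0 := u t r with hz0
  -- fderiv facts
  set L := fderiv ℝ (Function.uncurry w) (t, z0) with hLdef
  have hL : HasFDerivAt (Function.uncurry w) L (t, z0) := (hWd (t, z0)).hasFDerivAt
  have h10 : HasDerivAt (fun s => w s z0) (L (1, 0)) t :=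
    by have := hL.comp_hasDerivAt t ((hasDerivAt_id t).prodMk (hasDerivAt_const t z0)); exact this
  have h01 : HasDerivAt (fun y => w t y) (L (0, 1)) z0 :=
    hL.comp_hasDerivAt z0 ((hasDerivAt_const z0 t).prodMk (hasDerivAt_id z0))
  have ht10 : partial_t w t z0 = L (1, 0) := h10.deriv
  have hr01 : partial_r w t z0 = L (0, 1) := h01.deriv
  -- E3 : time derivative of the hodograph relation
  have hu_t : HasDerivAt (fun s => u s r) (partial_t u t r) t := (hut t r hr).hasDerivAt
  have hcompt : HasDerivAt (fun s => w s (u s r)) (L (1, partial_t u t r)) t :=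
    by have := hL.comp_hasDerivAt t ((hasDerivAt_id t).prodMk hu_t); exact this
  have hconst : (fun s => w s (u s r)) = fun _ => r ^ n / (n : ℝ) :=
    funext fun s => hhod s r hr
  have hzero : L (1, partial_t u t r) = 0 := by
    rw [hconst] at hcompt
    exact hcompt.unique (hasDerivAt_const t _)
  have hsplit : L (1, partial_t u t r) = L (1, 0) + partial_t u t r * L (0, 1) := by
    have hv : ((1 : ℝ), partial_t u t r)
        = (1, 0) + partial_t u t r • ((0 : ℝ), (1 : ℝ)) := by
      simp [Prod.ext_iff]
    rw [hv, map_add, map_smul, smul_eq_mul]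
  have E3 : partial_t w t z0 + partial_r w t z0 * partial_t u t r = 0 := by
    rw [ht10, hr01]
    rw [hsplit] at hzero
    linear_combination hzero
  -- E1 : first space derivative of the hodograph relation, on all of (0, ∞)
  have hnR : (n : ℝ) ≠ 0 := Nat.cast_ne_zero.mpr (by omega)
  have E1 : ∀ s : ℝ, 0 < s → partial_r w t (u t s) * partial_r u t s = s ^ (n - 1) := by
    intro s hs
    have hu_r : HasDerivAt (fun y => u t y) (partial_r u t s) s := (hur' t s hs).hasDerivAt
    have hcomp : HasDerivAt (fun y => w t (u t y))
        (partial_r w t (u t s) * partial_r u t s) s := (hDz t (u t s)).comp s hu_r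
    have heq : (fun y : ℝ => y ^ n / (n : ℝ)) =ᶠ[nhds s] fun y => w t (u t y) := by
      filter_upwards [Ioi_mem_nhds hs] with y hy
      exact (hhod t y hy).symm
    have hpow : HasDerivAt (fun y : ℝ => y ^ n / (n : ℝ))
        ((n : ℝ) * s ^ (n - 1) / (n : ℝ)) s := by
      exact_mod_cast (hasDerivAt_pow n s).div_const (n : ℝ)
    have huniq := (hcomp.congr_of_eventuallyEq heq).unique hpow
    rw [huniq, mul_div_assoc, mul_comm]
    field_simp
  -- E2 : second space derivative of the hodograph relation
  have hu_r : HasDerivAt (fun y => u t y) (partial_r u t r) r := (hur' t r hr).hasDerivAt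
  have h1 : HasDerivAt (fun y => partial_r w t (u t y))
      (partial_rr w t z0 * partial_r u t r) r := (hDzz t z0).comp r hu_r
  have h2 : HasDerivAt (fun y => partial_r u t y) (partial_rr u t r) r :=
    (hurr t r hr).hasDerivAt
  have hprod := h1.mul h2
  have heq2 : (fun y : ℝ => y ^ (n - 1))
      =ᶠ[nhds r] fun y => partial_r w t (u t y) * partial_r u t y := by
    filter_upwards [Ioi_mem_nhds hr] with y hy
    exact (E1 y hy).symm
  have E2 : partial_rr w t z0 * partial_r u t r * partial_r u t r
      + partial_r w t z0 * partial_rr u t r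
      = ((n - 1 : ℕ) : ℝ) * r ^ (n - 1 - 1) :=
    (hprod.congr_of_eventuallyEq heq2).unique (hasDerivAt_pow (n - 1) r)
  -- final algebra
  have hc : ((n - 1 : ℕ) : ℝ) * r ^ (n - 1 - 1) * r = ((n : ℝ) - 1) * r ^ (n - 1) :=
    pow_helper n hn r
  have F1 : partial_r w t z0 * partial_r u t r = r ^ (n - 1) := E1 r hr
  have hpd := hpde t r hr
  have hpd2 : partial_t u t r * (partial_r u t r) ^ 2 * r
      = κ * (partial_rr u t r * r - ((n : ℝ) - 1) * partial_r u t r)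
        + f z0 * (partial_r u t r) ^ 2 * r := by
    rw [hpd]
    field_simp
    ring
  have hden : (partial_r u t r) ^ 2 * r ≠ 0 :=
    mul_ne_zero (pow_ne_zero 2 hne) hrne
  refine mul_right_cancel₀ hden ?_
  linear_combination ((partial_r u t r) ^ 2 * r) * E3 - partial_r w t z0 * hpd2
    - (κ * r) * E2 - κ * hc + (κ * ((n : ℝ) - 1)) * F1
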